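/- Let L be a full-rank lattice in ℝⁿ and F a finite subset of ℝⁿ. Then there exist another full-rank lattice L' and a finite set F' such that L+F ⊂ L'+F', L' ∩ ℤ[F'] = {0}, and L ⊂ L', where ℤ[F'] is the additive group generated by F'. -/

import Mathlib

open Set Pointwise

/-- A full-rank lattice in ℝⁿ: the image of ℤⁿ under an invertible linear map. -/
def IsFullLattice (n : ℕ) (L : Set (Fin n → ℝ)) : Prop :=
  ∃ T : (Fin n → ℝ) ≃ₗ[ℝ] (Fin n → ℝ),
    L = Set.range (fun m : Fin n → ℤ => T (fun i => (m i : ℝ)))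

private lemma latt_eq (n : ℕ) (T : (Fin n → ℝ) ≃ₗ[ℝ] (Fin n → ℝ)) :
    Set.range (fun m : Fin n → ℤ => T (fun i => (m i : ℝ))) =
      ↑(Submodule.span ℤ (Set.range (fun i => T (Pi.basisFun ℝ (Fin n) i)))) := by
  have key : ∀ m : Fin n → ℤ, T (fun i => (m i : ℝ)) =
      ∑ i, m i • T (Pi.basisFun ℝ (Fin n) i) := by
    intro m
    have h1 : (fun i => (m i : ℝ)) = ∑ i, ((m i : ℝ)) • Pi.basisFun ℝ (Fin n) i := by
      have := (Pi.basisFun ℝ (Fin n)).sum_repr (fun i => (m i : ℝ))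
      simp only [Pi.basisFun_repr] at this
      exact this.symm
    rw [h1, map_sum]
    refine Finset.sum_congr rfl fun i _ => ?_
    rw [map_smul, Int.cast_smul_eq_zsmul]
  ext x
  simp only [Set.mem_range, SetLike.mem_coe, Submodule.mem_span_range_iff_exists_fun]
  constructor
  · rintro ⟨m, rfl⟩; exact ⟨m, (key m).symm⟩
  · rintro ⟨c, rfl⟩; exact ⟨c, key c⟩

/-- Given a full-rank lattice `L ⊆ ℝⁿ` and a finite set `F`, there are a
full-rank lattice `L'` and a finite set `F'` with `L + F ⊆ L' + F'`,
`L' ∩ ℤ[F'] = {0}` and `L ⊆ L'`. -/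
theorem stmt15 (n : ℕ) (L : Set (Fin n → ℝ)) (hL : IsFullLattice n L)
    (F : Set (Fin n → ℝ)) (hF : F.Finite) :
    ∃ (L' F' : Set (Fin n → ℝ)), IsFullLattice n L' ∧ F'.Finite ∧
      L + F ⊆ L' + F' ∧
      L' ∩ (AddSubgroup.closure F' : Set (Fin n → ℝ)) = {0} ∧
      L ⊆ L' := by
  classical
  obtain ⟨T, hT⟩ := hL
  set bvec : Fin n → (Fin n → ℝ) := fun i => T (Pi.basisFun ℝ (Fin n) i) with hbvec
  have hLset : L = ↑(Submodule.span ℤ (Set.range bvec)) := by rw [hT, latt_eq]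
  set N : Submodule ℤ (Fin n → ℝ) := Submodule.span ℤ (Set.range bvec) with hN
  set M : Submodule ℤ (Fin n → ℝ) := Submodule.span ℤ (Set.range bvec ∪ F) with hM
  have hNM : N ≤ M := Submodule.span_mono Set.subset_union_left
  have hFM : F ⊆ ↑M := subset_trans Set.subset_union_right Submodule.subset_span
  haveI : Module.Finite ℤ ↥M :=
    Module.Finite.span_of_finite ℤ ((Set.finite_range bvec).union hF)
  set ι := Module.Free.ChooseBasisIndex ℤ ↥M with hι
  set bb0 : Module.Basis ι ℤ ↥M := Module.Free.chooseBasis ℤ ↥M with hbb0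
  set N' : Submodule ℤ ↥M := N.comap M.subtype with hN'
  obtain ⟨k, snf⟩ := N'.smithNormalForm bb0
  -- the rank of N is n
  have hliR : LinearIndependent ℝ bvec := by
    have := ((Pi.basisFun ℝ (Fin n)).map T).linearIndependent
    have he : ⇑((Pi.basisFun ℝ (Fin n)).map T) = bvec := by
      funext i; rw [Module.Basis.map_apply]
    rwa [he] at this
  have hliZ : LinearIndependent ℤ bvec :=
    hliR.restrict_scalars (fun x y h => by simpa using h)
  have bNbasis : Module.Basis (Fin n) ℤ ↥N := Module.Basis.span hliZ
  have hkn : k = n := by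
    simpa using Fintype.card_congr
      ((snf.bN.map (Submodule.comapSubtypeEquivOfLe hNM)).indexEquiv bNbasis)
  subst k
  set bb : Module.Basis ι ℤ ↥M := snf.bM with hbb
  set f : Fin n ↪ ι := snf.f with hf
  set evec : Fin n → (Fin n → ℝ) := fun i => ((bb (f i) : ↥M) : Fin n → ℝ) with hevec
  set L'Z : Submodule ℤ (Fin n → ℝ) := Submodule.span ℤ (Set.range evec) with hL'Z
  -- every element of N lies in the ℤ-span of evec
  have hNL' : ∀ x, x ∈ N → x ∈ L'Z := by
    intro x hx
    have hxM : x ∈ M := hNM hx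
    set y : ↥N' := ⟨⟨x, hxM⟩, by simpa [hN', Submodule.mem_comap] using hx⟩ with hy
    have h1 : x = ∑ i, (snf.bN.repr y i * snf.a i) • evec i := by
      have hs := snf.bN.sum_repr y
      have := congrArg (fun z : ↥N' => ((z : ↥M) : Fin n → ℝ)) hs
      change _ = x at this
      rw [← this]
      rw [show (((∑ i, snf.bN.repr y i • snf.bN i : ↥N') : ↥M) : Fin n → ℝ)
            = ∑ i, snf.bN.repr y i • (((snf.bN i : ↥M)) : Fin n → ℝ) by push_cast; rfl]
      refine Finset.sum_congr rfl fun i _ => ?_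
      rw [snf.snf i]
      push_cast
      rw [smul_smul]
    rw [h1]
    exact Submodule.sum_mem _ fun i _ =>
      Submodule.smul_mem _ _ (Submodule.subset_span ⟨i, rfl⟩)
  have hLL' : L ⊆ ↑L'Z := by
    rw [hLset]; intro x hx; exact hNL' x hx
  -- evec is an ℝ-basis
  have hZR : L'Z ≤ (Submodule.span ℝ (Set.range evec)).restrictScalars ℤ :=
    Submodule.span_le.mpr Submodule.subset_span
  have hspanR : ⊤ ≤ Submodule.span ℝ (Set.range evec) := by
    have hBtop : Submodule.span ℝ (Set.range bvec) = ⊤ := by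
      have := ((Pi.basisFun ℝ (Fin n)).map T).span_eq
      have he : ⇑((Pi.basisFun ℝ (Fin n)).map T) = bvec := by
        funext i; rw [Module.Basis.map_apply]
      rwa [he] at this
    rw [← hBtop]
    refine Submodule.span_le.mpr ?_
    rintro _ ⟨j, rfl⟩
    exact hZR (hNL' (bvec j) (Submodule.subset_span ⟨j, rfl⟩))
  have hcard : Fintype.card (Fin n) = Module.finrank ℝ (Fin n → ℝ) := by
    simp
  set bE : Module.Basis (Fin n) ℝ (Fin n → ℝ) := basisOfTopLeSpanOfCardEqFinrank evec hspanR hcard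
    with hbE'
  have hbE : ⇑bE = evec := coe_basisOfTopLeSpanOfCardEqFinrank _ _ _
  have hL'full : IsFullLattice n ↑L'Z := by
    refine ⟨(Pi.basisFun ℝ (Fin n)).equiv bE (Equiv.refl _), ?_⟩
    have hrange : (fun i => ((Pi.basisFun ℝ (Fin n)).equiv bE (Equiv.refl (Fin n)))
        ((Pi.basisFun ℝ (Fin n)) i)) = evec := by
      funext i
      rw [Module.Basis.equiv_apply]
      simp [hbE]
    rw [latt_eq, hrange]
  -- the projection to the lattice coordinates
  set p : ↥M → ↥M := fun x => ∑ i, bb.repr x (f i) • bb (f i) with hp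
  set F' : Set (Fin n → ℝ) :=
    (fun y : ↥M => ((y - p y : ↥M) : Fin n → ℝ)) '' {y : ↥M | (y : Fin n → ℝ) ∈ F} with hF'
  have hF'fin : F'.Finite := (hF.preimage Subtype.coe_injective.injOn).image _
  have hp_mem : ∀ y : ↥M, ((p y : ↥M) : Fin n → ℝ) ∈ L'Z := by
    intro y
    rw [show ((p y : ↥M) : Fin n → ℝ) = ∑ i, bb.repr y (f i) • evec i by
      simp only [hp]; push_cast; rfl]
    exact Submodule.sum_mem _ fun i _ =>
      Submodule.smul_mem _ _ (Submodule.subset_span ⟨i, rfl⟩)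
  set Q : Submodule ℤ ↥M := Submodule.span ℤ (⇑bb '' (Set.range ⇑f)ᶜ) with hQ
  have hr_mem : ∀ y : ↥M, y - p y ∈ Q := by
    intro y
    have hsum := bb.sum_repr y
    have himg : p y = ∑ j ∈ Finset.univ.image f, bb.repr y j • bb j := by
      rw [Finset.sum_image (fun a _ b _ h => f.injective h)]
    have h2 := Finset.sum_sdiff (f := fun j => bb.repr y j • bb j)
      (Finset.subset_univ (Finset.univ.image f))
    rw [hsum] at h2
    have h3 : y - p y = ∑ j ∈ Finset.univ \ Finset.univ.image f, bb.repr y j • bb j := by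
      rw [himg]
      exact (eq_sub_of_add_eq h2).symm
    rw [h3]
    refine Submodule.sum_mem _ fun j hj => ?_
    refine Submodule.smul_mem _ _ (Submodule.subset_span ⟨j, ?_, rfl⟩)
    have := (Finset.mem_sdiff.mp hj).2
    simp only [Finset.mem_image, Finset.mem_univ, true_and, not_exists] at this
    simpa [Set.mem_compl_iff, Set.mem_range] using this
  have hF'C : F' ⊆ ↑(Q.map M.subtype) := by
    rintro _ ⟨y, _, rfl⟩
    exact ⟨y - p y, hr_mem y, rfl⟩
  have hdisj : Disjoint (Submodule.span ℤ (⇑bb '' Set.range ⇑f)) Q :=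
    bb.linearIndependent.disjoint_span_image disjoint_compl_right
  have hL'eq : L'Z = (Submodule.span ℤ (⇑bb '' Set.range ⇑f)).map M.subtype := by
    rw [Submodule.map_span]
    rw [Set.image_image, ← Set.range_comp]
    rfl
  have hinter : ↑L'Z ∩ (AddSubgroup.closure F' : Set (Fin n → ℝ)) = {0} := by
    apply Set.eq_singleton_iff_unique_mem.mpr
    refine ⟨⟨Submodule.zero_mem _, AddSubgroup.zero_mem _⟩, ?_⟩
    rintro x ⟨hx1, hx2⟩
    have hx2' : x ∈ Q.map M.subtype := by
      have hle : AddSubgroup.closure F' ≤ (Q.map M.subtype).toAddSubgroup :=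
        (AddSubgroup.closure_le _).mpr hF'C
      exact hle hx2
    rw [hL'eq] at hx1
    obtain ⟨y, hyP, hyx⟩ := hx1
    obtain ⟨z, hzQ, hzx⟩ := hx2'
    have hyz : y = z := Subtype.coe_injective (hyx.trans hzx.symm)
    subst hyz
    have hy0 : y = 0 := Submodule.disjoint_def.mp hdisj y hyP hzQ
    rw [← hyx, hy0]
    rfl
  have hsub : L + F ⊆ ↑L'Z + F' := by
    rintro x hx
    rw [Set.mem_add] at hx
    obtain ⟨a, ha, b, hb, rfl⟩ := hx
    have hbM : b ∈ M := hFM hb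
    refine Set.mem_add.mpr ⟨a + ((p ⟨b, hbM⟩ : ↥M) : Fin n → ℝ),
      Submodule.add_mem _ (hLL' ha) (hp_mem _),
      (((⟨b, hbM⟩ : ↥M) - p ⟨b, hbM⟩ : ↥M) : Fin n → ℝ),
      ⟨⟨b, hbM⟩, hb, rfl⟩, ?_⟩
    push_cast
    abel
  exact ⟨↑L'Z, F', hL'full, hF'fin, hsub, hinter, hLL'⟩
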